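/- Let P_1,…,P_N be orthogonal projections onto subspaces of EuclideanSpace ℝ (Fin n) and let p_1,…,p_N ∈ [1,∞) satisfy Σ_{j=1}^N (1/p_j) P_j ≤ I in the Loewner order. Then for every a with ‖a‖ < 1: Σ_{j=1}^N (1/p_j) · ‖P_j a‖ · arctanh(‖P_j a‖) ≤ ‖a‖ · arctanh(‖a‖). -/

import Mathlib

/-- The inverse hyperbolic tangent, `arctanh x = (1/2) log ((1+x)/(1-x))`. -/
noncomputable def arctanh (x : ℝ) : ℝ := (1 / 2) * Real.log ((1 + x) / (1 - x))

noncomputable def gA (x : ℝ) : ℝ := (1 / 2) * (Real.log (1 + x) - Real.log (1 - x))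
noncomputable def gA1 (x : ℝ) : ℝ := (1 / 2) * ((1 + x)⁻¹ + (1 - x)⁻¹)

lemma hgA1 {x : ℝ} (h1 : (1 + x) ≠ 0) (h2 : (1 - x) ≠ 0) : HasDerivAt gA (gA1 x) x := by
  have d1 : HasDerivAt (fun y : ℝ => Real.log (1 + y)) (1 / (1 + x)) x := by
    simpa using (((hasDerivAt_id x).const_add 1).log h1)
  have d2 : HasDerivAt (fun y : ℝ => Real.log (1 - y)) ((-1) / (1 - x)) x := by
    simpa using (((hasDerivAt_id x).const_sub 1).log h2)
  have := (d1.sub d2).const_mul (1/2 : ℝ)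
  refine this.congr_deriv ?_
  unfold gA1
  field_simp
  ring

lemma hgA2 {x : ℝ} (h1 : (1 + x) ≠ 0) (h2 : (1 - x) ≠ 0) :
    HasDerivAt gA1 ((1 / 2) * (-(((1 + x) ^ 2)⁻¹) + ((1 - x) ^ 2)⁻¹)) x := by
  have d1 : HasDerivAt (fun y : ℝ => (1 + y)⁻¹) (-(((1 + x) ^ 2)⁻¹)) x := by
    have := (((hasDerivAt_id x).const_add 1).inv h1)
    refine this.congr_deriv ?_
    simp only [id_eq]; ring
  have d2 : HasDerivAt (fun y : ℝ => (1 - y)⁻¹) (((1 - x) ^ 2)⁻¹) x := by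
    have := (((hasDerivAt_id x).const_sub 1).inv h2)
    refine this.congr_deriv ?_
    simp only [id_eq]; ring
  have := (d1.add d2).const_mul (1/2 : ℝ)
  exact this

lemma convexOn_gA : ConvexOn ℝ (Set.Ico (0:ℝ) 1) gA := by
  have hne : ∀ x ∈ Set.Ico (0:ℝ) 1, (1 + x) ≠ 0 ∧ (1 - x) ≠ 0 := by
    intro x hx
    constructor <;> nlinarith [hx.1, hx.2]
  have hev : ∀ x ∈ Set.Ioo (0:ℝ) 1, deriv gA =ᶠ[nhds x] gA1 := by
    intro x hx
    filter_upwards [isOpen_Ioo.mem_nhds hx] with y hy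
    exact (hgA1 (by nlinarith [hy.1, hy.2]) (by nlinarith [hy.1, hy.2])).deriv
  apply convexOn_of_deriv2_nonneg (convex_Ico 0 1)
  · intro x hx
    exact (hgA1 (hne x hx).1 (hne x hx).2).differentiableAt.continuousAt.continuousWithinAt
  · rw [interior_Ico]
    intro x hx
    exact (hgA1 (hne x (Set.Ioo_subset_Ico_self hx)).1
      (hne x (Set.Ioo_subset_Ico_self hx)).2).differentiableAt.differentiableWithinAt
  · rw [interior_Ico]
    intro x hx
    have h1 := (hne x (Set.Ioo_subset_Ico_self hx)).1
    have h2 := (hne x (Set.Ioo_subset_Ico_self hx)).2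
    have : DifferentiableAt ℝ (deriv gA) x :=
      (Filter.EventuallyEq.differentiableAt_iff (hev x hx)).2 (hgA2 h1 h2).differentiableAt
    exact this.differentiableWithinAt
  · rw [interior_Ico]
    intro x hx
    have h1 := (hne x (Set.Ioo_subset_Ico_self hx)).1
    have h2 := (hne x (Set.Ioo_subset_Ico_self hx)).2
    have : deriv^[2] gA x = (1 / 2) * (-(((1 + x) ^ 2)⁻¹) + ((1 - x) ^ 2)⁻¹) := by
      show deriv (deriv gA) x = _
      rw [Filter.EventuallyEq.deriv_eq (hev x hx)]
      exact (hgA2 h1 h2).deriv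
    rw [this]
    have hle : (1 - x) ^ 2 ≤ (1 + x) ^ 2 := by nlinarith [hx.1, hx.2]
    have : ((1 + x) ^ 2)⁻¹ ≤ ((1 - x) ^ 2)⁻¹ := by
      apply inv_anti₀ (by positivity) hle
    nlinarith


lemma arctanh_eq_gA {x : ℝ} (h0 : 0 ≤ x) (h1 : x < 1) : arctanh x = gA x := by
  unfold arctanh gA
  rw [Real.log_div (by nlinarith) (by nlinarith)]

lemma arctanh_nonneg' {x : ℝ} (h0 : 0 ≤ x) (h1 : x < 1) : 0 ≤ arctanh x := by
  unfold arctanh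
  have : (1:ℝ) ≤ (1 + x) / (1 - x) := by
    rw [le_div_iff₀ (by linarith)]; linarith
  have := Real.log_nonneg this
  linarith

lemma key_arctanh {t s : ℝ} (ht : 0 ≤ t) (hts : t ≤ s) (hs : s < 1) :
    s * arctanh t ≤ t * arctanh s := by
  rcases eq_or_lt_of_le (le_trans ht hts) with h | h
  · have ht0 : t = 0 := le_antisymm (h ▸ hts) ht
    subst ht0
    rw [← h]
  · have h0m : (0:ℝ) ∈ Set.Ico (0:ℝ) 1 := by constructor <;> norm_num
    have hsm : s ∈ Set.Ico (0:ℝ) 1 := ⟨le_trans ht hts, hs⟩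
    have ha : (0:ℝ) ≤ 1 - t / s := by
      have : t / s ≤ 1 := div_le_one_of_le₀ hts h.le
      linarith
    have hb : (0:ℝ) ≤ t / s := div_nonneg ht h.le
    have hcomb := convexOn_gA.2 h0m hsm ha hb (by ring)
    have hpt : (1 - t / s) • (0:ℝ) + (t / s) • s = t := by
      rw [smul_eq_mul, smul_eq_mul]
      field_simp
      ring
    rw [hpt] at hcomb
    have hg0 : gA 0 = 0 := by simp [gA]
    rw [hg0] at hcomb
    have hgt : gA t ≤ (t / s) * gA s := by
      have : (1 - t / s) * 0 + t / s * gA s = (t / s) * gA s := by ring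
      rw [smul_eq_mul, smul_eq_mul] at hcomb
      linarith [hcomb]
    have h2 : s * gA t ≤ t * gA s := by
      have := mul_le_mul_of_nonneg_left hgt h.le
      calc s * gA t ≤ s * ((t / s) * gA s) := this
        _ = t * gA s := by field_simp
    rw [arctanh_eq_gA ht (lt_of_le_of_lt hts hs), arctanh_eq_gA (le_trans ht hts) hs]
    exact h2


/-- If the orthogonal projections `P_j` onto the subspaces `V_j` satisfy
`Σ_j (1/p_j) P_j ≤ I` in the Loewner order, then for every `a` with `‖a‖ < 1`,
`Σ_j (1/p_j) ‖P_j a‖ arctanh(‖P_j a‖) ≤ ‖a‖ arctanh(‖a‖)`. -/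
theorem arctanh_subadditivity {n N : ℕ}
    (V : Fin N → Submodule ℝ (EuclideanSpace ℝ (Fin n)))
    (p : Fin N → ℝ) (hp : ∀ j, 1 ≤ p j)
    (hLoewner : ∀ x : EuclideanSpace ℝ (Fin n),
      ∑ j, (1 / p j) * ‖(Submodule.orthogonalProjectionOnto (V j) x : EuclideanSpace ℝ (Fin n))‖ ^ 2 ≤
        ‖x‖ ^ 2)
    (a : EuclideanSpace ℝ (Fin n)) (ha : ‖a‖ < 1) :
    ∑ j, (1 / p j) * (‖(Submodule.orthogonalProjectionOnto (V j) a : EuclideanSpace ℝ (Fin n))‖ *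
        arctanh ‖(Submodule.orthogonalProjectionOnto (V j) a : EuclideanSpace ℝ (Fin n))‖) ≤
      ‖a‖ * arctanh ‖a‖ := by
  have hs0 : 0 ≤ ‖a‖ := norm_nonneg a
  rcases eq_or_lt_of_le hs0 with h | h
  · have ha0 : a = 0 := norm_eq_zero.1 h.symm
    subst ha0
    simp [arctanh]
  · set s := ‖a‖ with hsdef
    have hc0 : 0 ≤ arctanh s / s := div_nonneg (arctanh_nonneg' hs0 ha) h.le
    have htj : ∀ j, ‖(Submodule.orthogonalProjectionOnto (V j) a : EuclideanSpace ℝ (Fin n))‖ ≤ s := by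
      intro j
      calc ‖(Submodule.orthogonalProjectionOnto (V j) a : EuclideanSpace ℝ (Fin n))‖
          = ‖Submodule.orthogonalProjectionOnto (V j) a‖ := rfl
        _ ≤ ‖Submodule.orthogonalProjectionOnto (V j)‖ * ‖a‖ := (Submodule.orthogonalProjectionOnto (V j)).le_opNorm a
        _ ≤ 1 * ‖a‖ :=
            mul_le_mul_of_nonneg_right (Submodule.orthogonalProjectionOnto_norm_le _) hs0
        _ = s := by rw [one_mul]
    calc ∑ j, (1 / p j) * (‖(Submodule.orthogonalProjectionOnto (V j) a : EuclideanSpace ℝ (Fin n))‖ *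
            arctanh ‖(Submodule.orthogonalProjectionOnto (V j) a : EuclideanSpace ℝ (Fin n))‖)
        ≤ ∑ j, (1 / p j) * ‖(Submodule.orthogonalProjectionOnto (V j) a : EuclideanSpace ℝ (Fin n))‖ ^ 2 *
            (arctanh s / s) := by
          apply Finset.sum_le_sum
          intro j _
          set t := ‖(Submodule.orthogonalProjectionOnto (V j) a : EuclideanSpace ℝ (Fin n))‖ with htdef
          have ht0 : 0 ≤ t := norm_nonneg _
          have hkey := key_arctanh ht0 (htj j) ha
          have h1 : arctanh t ≤ t * (arctanh s / s) := by
            have heq : t * (arctanh s / s) = (t * arctanh s) / s := by ring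
            rw [heq, le_div_iff₀ h]
            nlinarith [hkey]
          have h2 : t * arctanh t ≤ t ^ 2 * (arctanh s / s) := by
            have := mul_le_mul_of_nonneg_left h1 ht0
            calc t * arctanh t ≤ t * (t * (arctanh s / s)) := this
              _ = t ^ 2 * (arctanh s / s) := by ring
          have hpj : (0:ℝ) ≤ 1 / p j := by
            have := hp j; positivity
          calc (1 / p j) * (t * arctanh t) ≤ (1 / p j) * (t ^ 2 * (arctanh s / s)) :=
                mul_le_mul_of_nonneg_left h2 hpj
            _ = (1 / p j) * t ^ 2 * (arctanh s / s) := by ring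
      _ = (∑ j, (1 / p j) * ‖(Submodule.orthogonalProjectionOnto (V j) a : EuclideanSpace ℝ (Fin n))‖ ^ 2) *
            (arctanh s / s) := by rw [Finset.sum_mul]
      _ ≤ s ^ 2 * (arctanh s / s) := mul_le_mul_of_nonneg_right (hLoewner a) hc0
      _ = s * arctanh s := by field_simp
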